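/- The one-dimensional joint density of skew Brownian motion and its local time at 0, given for θ > 0 by f(t,x,y,θ) = (1 + q·sign(y)) (σ²θ + |x| + |y|)/√(2πt³σ²) · exp(-(σ²θ + |x| + |y|)²/(2tσ²)), together with the atom at θ = 0 of mass a(t,x,y) = (2πtσ²)^{-1/2}[exp(-(y-x)²/(2tσ²)) - exp(-(|y|+|x|)²/(2tσ²))], defines a probability measure: for all t > 0 and x ∈ ℝ, ∫_ℝ a(t,x,y) dy + ∫_ℝ ∫₀^∞ f(t,x,y,θ) dθ dy = 1. -/

import Mathlib

open Real MeasureTheory Filter Set Topology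

noncomputable def sgn (y : ℝ) : ℝ := if 0 < y then 1 else if y < 0 then -1 else 0

/-- Atom at `θ = 0` of the joint law of skew BM and its local time. -/
noncomputable def atomDensity (σ t x y : ℝ) : ℝ :=
  (Real.sqrt (2 * Real.pi * t * σ ^ 2))⁻¹ *
    (Real.exp (-(y - x) ^ 2 / (2 * t * σ ^ 2)) -
      Real.exp (-(|y| + |x|) ^ 2 / (2 * t * σ ^ 2)))

/-- Joint density (for `θ > 0`) of skew BM at time `t` and its local time at `0`. -/
noncomputable def jointDensity (σ q t x y θ : ℝ) : ℝ :=
  (1 + q * sgn y) * (σ ^ 2 * θ + |x| + |y|) / Real.sqrt (2 * Real.pi * t ^ 3 * σ ^ 2) *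
    Real.exp (-(σ ^ 2 * θ + |x| + |y|) ^ 2 / (2 * t * σ ^ 2))

/-- The θ-integral in closed form. -/
lemma theta_integral (s c m : ℝ) (hs : 0 < s) (hc : 0 < c) (hm : 0 ≤ m) :
    (∫ θ in Set.Ioi (0 : ℝ), (s * θ + m) * Real.exp (-(s * θ + m) ^ 2 / c))
      = (c / (2 * s)) * Real.exp (-m ^ 2 / c) := by
  have hderiv : ∀ θ ∈ Set.Ici (0 : ℝ), HasDerivAt
      (fun θ : ℝ => -(c / (2 * s)) * Real.exp (-(s * θ + m) ^ 2 / c))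
      ((s * θ + m) * Real.exp (-(s * θ + m) ^ 2 / c)) θ := by
    intro θ _
    have h1 : HasDerivAt (fun θ : ℝ => s * θ + m) s θ := by
      simpa using ((hasDerivAt_id θ).const_mul s).add_const m
    have h2 : HasDerivAt (fun θ : ℝ => -(s * θ + m) ^ 2 / c)
        (-(2 * (s * θ + m) * s) / c) θ := by
      have := ((h1.pow 2).neg).div_const c
      simpa [mul_comm, mul_assoc] using this
    have h3 := (h2.exp).const_mul (-(c / (2 * s)))
    refine h3.congr_deriv ?_
    field_simp
  have htend : Tendsto (fun θ : ℝ => -(c / (2 * s)) * Real.exp (-(s * θ + m) ^ 2 / c))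
      atTop (𝓝 0) := by
    have h1 : Tendsto (fun θ : ℝ => s * θ + m) atTop atTop :=
      tendsto_atTop_add_const_right _ m (tendsto_id.const_mul_atTop hs)
    have h2 : Tendsto (fun θ : ℝ => (s * θ + m) ^ 2 / c) atTop atTop :=
      Tendsto.atTop_div_const hc ((tendsto_pow_atTop two_ne_zero).comp h1)
    have h3 : Tendsto (fun θ : ℝ => -(s * θ + m) ^ 2 / c) atTop atBot := by
      simpa [neg_div] using tendsto_neg_atBot_iff.mpr h2
    have h4 : Tendsto (fun θ : ℝ => Real.exp (-(s * θ + m) ^ 2 / c)) atTop (𝓝 0) :=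
      Real.tendsto_exp_atBot.comp h3
    simpa using h4.const_mul (-(c / (2 * s)))
  have hpos : ∀ θ ∈ Set.Ioi (0 : ℝ), 0 ≤ (s * θ + m) * Real.exp (-(s * θ + m) ^ 2 / c) := by
    intro θ hθ
    have : 0 ≤ s * θ + m := by
      have := hθ.out
      positivity
    positivity
  have := integral_Ioi_of_hasDerivAt_of_nonneg' hderiv hpos htend
  rw [this]
  simp

theorem joint_law_is_probability (σ q : ℝ) (hσ : 0 < σ) (hq : q ∈ Set.Icc (-1 : ℝ) 1) :
    ∀ t x : ℝ, 0 < t →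
      (∫ y : ℝ, atomDensity σ t x y) +
        (∫ y : ℝ, ∫ θ in Set.Ioi (0 : ℝ), jointDensity σ q t x y θ) = 1 := by
  intro t x ht
  have hc : (0 : ℝ) < 2 * t * σ ^ 2 := by positivity
  set c : ℝ := 2 * t * σ ^ 2 with hc_def
  set K : ℝ := (Real.sqrt (2 * Real.pi * t * σ ^ 2))⁻¹ with hK_def
  have hsqrt_pos : 0 < Real.sqrt (2 * Real.pi * t * σ ^ 2) :=
    Real.sqrt_pos.mpr (by positivity)
  -- integrability of the shifted gaussian
  have hintE1 : Integrable (fun y : ℝ => Real.exp (-(y - x) ^ 2 / c)) := by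
    have h := (integrable_exp_neg_mul_sq (b := c⁻¹) (by positivity)).comp_sub_right x
    refine h.congr (Eventually.of_forall fun y => ?_)
    show Real.exp (-c⁻¹ * (y - x) ^ 2) = Real.exp (-(y - x) ^ 2 / c)
    rw [neg_div, neg_mul, div_eq_inv_mul]
  -- integrability of the folded gaussian
  have hcontE2 : Continuous (fun y : ℝ => Real.exp (-(|y| + |x|) ^ 2 / c)) := by
    apply Real.continuous_exp.comp
    exact (((continuous_abs.add continuous_const).pow 2).neg).div_const c
  have hboundE2 : ∀ y : ℝ, Real.exp (-(|y| + |x|) ^ 2 / c) ≤ Real.exp (-c⁻¹ * y ^ 2) := by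
    intro y
    apply Real.exp_le_exp.mpr
    have h1 : y ^ 2 ≤ (|y| + |x|) ^ 2 := by
      nlinarith [abs_nonneg x, abs_nonneg y, sq_abs y]
    rw [neg_mul, neg_div, neg_le_neg_iff, mul_comm, ← div_eq_mul_inv]
    gcongr
  have hintE2 : Integrable (fun y : ℝ => Real.exp (-(|y| + |x|) ^ 2 / c)) := by
    refine (integrable_exp_neg_mul_sq (b := c⁻¹) (by positivity)).mono'
      hcontE2.aestronglyMeasurable (Eventually.of_forall fun y => ?_)
    rw [Real.norm_eq_abs, abs_of_nonneg (Real.exp_nonneg _)]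
    exact hboundE2 y
  -- value of the shifted gaussian integral
  have hE1 : (∫ y : ℝ, Real.exp (-(y - x) ^ 2 / c)) = Real.sqrt (2 * Real.pi * t * σ ^ 2) := by
    have h1 : (∫ y : ℝ, Real.exp (-(y - x) ^ 2 / c))
        = ∫ y : ℝ, (fun u : ℝ => Real.exp (-c⁻¹ * u ^ 2)) (y - x) := by
      congr 1; funext y
      show Real.exp (-(y - x) ^ 2 / c) = Real.exp (-c⁻¹ * (y - x) ^ 2)
      rw [neg_div, neg_mul, div_eq_inv_mul]
    rw [h1, integral_sub_right_eq_self (fun u : ℝ => Real.exp (-c⁻¹ * u ^ 2)) x,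
      integral_gaussian]
    congr 1
    rw [div_eq_mul_inv, inv_inv, hc_def]
    ring
  -- the atom part
  have hAtom : (∫ y : ℝ, atomDensity σ t x y)
      = 1 - K * ∫ y : ℝ, Real.exp (-(|y| + |x|) ^ 2 / c) := by
    have h1 : (∫ y : ℝ, atomDensity σ t x y)
        = K * ∫ y : ℝ, (Real.exp (-(y - x) ^ 2 / c) - Real.exp (-(|y| + |x|) ^ 2 / c)) := by
      rw [← integral_const_mul _ _]; rfl
    rw [h1, integral_sub hintE1 hintE2, mul_sub, hE1, hK_def,
      inv_mul_cancel₀ hsqrt_pos.ne']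
  -- the inner θ integral
  have hsq3 : Real.sqrt (2 * Real.pi * t ^ 3 * σ ^ 2)
      = t * Real.sqrt (2 * Real.pi * t * σ ^ 2) := by
    rw [show 2 * Real.pi * t ^ 3 * σ ^ 2 = t ^ 2 * (2 * Real.pi * t * σ ^ 2) by ring,
      Real.sqrt_mul (sq_nonneg t), Real.sqrt_sq ht.le]
  have hinner : ∀ y : ℝ, (∫ θ in Set.Ioi (0 : ℝ), jointDensity σ q t x y θ)
      = (1 + q * sgn y) * (K * Real.exp (-(|y| + |x|) ^ 2 / c)) := by
    intro y
    have hm : (0 : ℝ) ≤ |x| + |y| := by positivity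
    have hT := theta_integral (σ ^ 2) c (|x| + |y|) (by positivity) hc hm
    have h1 : (∫ θ in Set.Ioi (0 : ℝ), jointDensity σ q t x y θ)
        = ∫ θ in Set.Ioi (0 : ℝ), ((1 + q * sgn y) / Real.sqrt (2 * Real.pi * t ^ 3 * σ ^ 2))
            * ((σ ^ 2 * θ + (|x| + |y|)) *
              Real.exp (-(σ ^ 2 * θ + (|x| + |y|)) ^ 2 / c)) := by
      refine setIntegral_congr_fun measurableSet_Ioi fun θ _ => ?_
      unfold jointDensity
      rw [show σ ^ 2 * θ + |x| + |y| = σ ^ 2 * θ + (|x| + |y|) from add_assoc _ _ _]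
      ring
    rw [h1, integral_const_mul _ _, hT, hsq3, hK_def]
    rw [show |x| + |y| = |y| + |x| from add_comm _ _]
    have hs : Real.sqrt (2 * Real.pi * t * σ ^ 2) ≠ 0 := hsqrt_pos.ne'
    have hσ2 : (σ : ℝ) ^ 2 ≠ 0 := by positivity
    field_simp
    ring
  -- evenness/oddness
  have hintG : Integrable (fun y : ℝ => K * Real.exp (-(|y| + |x|) ^ 2 / c)) :=
    hintE2.const_mul K
  have hmeas_sgn : Measurable sgn := by
    unfold sgn
    exact Measurable.ite (measurableSet_lt measurable_const measurable_id) measurable_const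
      (Measurable.ite (measurableSet_lt measurable_id measurable_const) measurable_const
        measurable_const)
  have hintH : Integrable (fun y : ℝ => sgn y * (K * Real.exp (-(|y| + |x|) ^ 2 / c))) := by
    refine (hintG.abs).mono' ?_ (Eventually.of_forall fun y => ?_)
    · exact (hmeas_sgn.aestronglyMeasurable.mul
        ((continuous_const.mul hcontE2).aestronglyMeasurable))
    · rw [Real.norm_eq_abs, abs_mul]
      have hsgn : |sgn y| ≤ 1 := by
        unfold sgn; split_ifs <;> norm_num
      calc |sgn y| * |K * Real.exp (-(|y| + |x|) ^ 2 / c)|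
          ≤ 1 * |K * Real.exp (-(|y| + |x|) ^ 2 / c)| := by
            exact mul_le_mul_of_nonneg_right hsgn (abs_nonneg _)
        _ = |K * Real.exp (-(|y| + |x|) ^ 2 / c)| := one_mul _
  have hodd : (∫ y : ℝ, sgn y * (K * Real.exp (-(|y| + |x|) ^ 2 / c))) = 0 := by
    have hneg : ∀ y : ℝ, sgn (-y) * (K * Real.exp (-(|(-y)| + |x|) ^ 2 / c))
        = -(sgn y * (K * Real.exp (-(|y| + |x|) ^ 2 / c))) := by
      intro y
      have : sgn (-y) = - sgn y := by
        unfold sgn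
        rcases lt_trichotomy y 0 with h | h | h
        · simp [h, neg_pos.mpr h, not_lt.mpr h.le, asymm h]
        · simp [h]
        · simp [h, not_lt.mpr h.le, asymm h, neg_neg]
      rw [abs_neg, this]; ring
    have h1 : (∫ y : ℝ, sgn y * (K * Real.exp (-(|y| + |x|) ^ 2 / c)))
        = ∫ y : ℝ, sgn (-y) * (K * Real.exp (-(|(-y)| + |x|) ^ 2 / c)) :=
      (integral_neg_eq_self (fun y : ℝ => sgn y * (K * Real.exp (-(|y| + |x|) ^ 2 / c)))
        volume).symm
    have h2 : (∫ y : ℝ, sgn (-y) * (K * Real.exp (-(|(-y)| + |x|) ^ 2 / c)))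
        = - ∫ y : ℝ, sgn y * (K * Real.exp (-(|y| + |x|) ^ 2 / c)) := by
      rw [← integral_neg]
      exact integral_congr_ae (Eventually.of_forall fun y => hneg y)
    have := h1.trans h2
    linarith
  -- the joint part
  have hJoint : (∫ y : ℝ, ∫ θ in Set.Ioi (0 : ℝ), jointDensity σ q t x y θ)
      = K * ∫ y : ℝ, Real.exp (-(|y| + |x|) ^ 2 / c) := by
    have h1 : (∫ y : ℝ, ∫ θ in Set.Ioi (0 : ℝ), jointDensity σ q t x y θ)
        = ∫ y : ℝ, ((K * Real.exp (-(|y| + |x|) ^ 2 / c))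
            + q * (sgn y * (K * Real.exp (-(|y| + |x|) ^ 2 / c)))) := by
      congr 1; funext y; rw [hinner y]; ring
    rw [h1, integral_add hintG (hintH.const_mul q), integral_const_mul q _, hodd,
      mul_zero, add_zero, integral_const_mul K _]
  rw [hAtom, hJoint]
  ring
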